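/- arXiv:2504.01280 — 6 statements merged into one kernel-verified Lean document; each statement's English description precedes it below -/
import Mathlib

section
/- There exist a finite marriage market and an individually rational matching μ such that no finite sequence of matchings μ = μ_1, μ_2, …, μ_k ending in a stable matching μ_k has the property that for each i, μ_{i+1} is obtained from μ_i by satisfying a blocking pair of μ_i that is mutually optimal whenever μ_i admits at least one mutually optimal blocking pair. In other words, there is no decentralized process of satisfying blocking pairs that always chooses mutually optimal blocking pairs when they exist and always reaches a stable matching. -/
namespace Marriage

/-- A marriage market: disjoint sets of men `M` and women `W`, each man `m` with a strict
(linear) preference order on `W ∪ {m}` (encoded as `Option W`, where `none` stands for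
staying single, i.e. being matched to himself), and likewise for women. -/
structure Market (M W : Type*) where
  prefM : M → Option W → Option W → Prop
  prefW : W → Option M → Option M → Prop
  prefM_sto : ∀ m, IsStrictTotalOrder (Option W) (prefM m)
  prefW_sto : ∀ w, IsStrictTotalOrder (Option M) (prefW w)

/-- A matching: `f m = some w` iff `m` is matched to `w` iff `g w = some m`;
`f m = none` (resp. `g w = none`) means the player is unmatched (matched to themself). -/
structure Matching (M W : Type*) where
  f : M → Option W
  g : W → Option M
  consistent : ∀ m w, f m = some w ↔ g w = some m

variable {M W : Type*}

/-- `(m, w)` is a blocking pair of `μ`. -/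
def IsBlocking (E : Market M W) (μ : Matching M W) (m : M) (w : W) : Prop :=
  μ.f m ≠ some w ∧ E.prefM m (some w) (μ.f m) ∧ E.prefW w (some m) (μ.g w)

/-- `μ` is individually rational: no player strictly prefers being single to their match. -/
def IndivRational (E : Market M W) (μ : Matching M W) : Prop :=
  (∀ m, ¬ E.prefM m none (μ.f m)) ∧ (∀ w, ¬ E.prefW w none (μ.g w))

/-- `μ` is stable: individually rational and without blocking pairs. -/
def IsStable (E : Market M W) (μ : Matching M W) : Prop :=
  IndivRational E μ ∧ ∀ m w, ¬ IsBlocking E μ m w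

/-- `μ'` is obtained from `μ` by satisfying the pair `(m, w)`: `m` and `w` get matched to
each other, their former partners (if any) become unmatched, everyone else keeps their
partner. -/
def Satisfies (μ μ' : Matching M W) (m : M) (w : W) : Prop :=
  μ'.f m = some w ∧ μ'.g w = some m ∧
  (∀ m', m' ≠ m → μ.f m' = some w → μ'.f m' = none) ∧
  (∀ m', m' ≠ m → μ.f m' ≠ some w → μ'.f m' = μ.f m') ∧
  (∀ w', w' ≠ w → μ.g w' = some m → μ'.g w' = none) ∧
  (∀ w', w' ≠ w → μ.g w' ≠ some m → μ'.g w' = μ.g w')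

/-- A blocking pair `(m, w)` of `μ` that is optimal for the man `m`. -/
def OptimalForM (E : Market M W) (μ : Matching M W) (m : M) (w : W) : Prop :=
  IsBlocking E μ m w ∧
  ∀ w', IsBlocking E μ m w' → w' ≠ w → E.prefM m (some w) (some w')

/-- A blocking pair `(m, w)` of `μ` that is optimal for the woman `w`. -/
def OptimalForW (E : Market M W) (μ : Matching M W) (m : M) (w : W) : Prop :=
  IsBlocking E μ m w ∧
  ∀ m', IsBlocking E μ m' w → m' ≠ m → E.prefW w (some m) (some m')

/-- A mutually optimal blocking pair of `μ`. -/
def MutuallyOptimal (E : Market M W) (μ : Matching M W) (m : M) (w : W) : Prop :=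
  OptimalForM E μ m w ∧ OptimalForW E μ m w


/-! ### Auxiliary machinery for the counterexample -/

theorem matching_ext {μ₁ μ₂ : Matching M W} (hf : μ₁.f = μ₂.f) (hg : μ₁.g = μ₂.g) :
    μ₁ = μ₂ := by
  cases μ₁; cases μ₂; simp_all

/-- A matching obtained from `μ` by satisfying `(m, w)` is unique. -/
theorem satisfies_unique {μ μ₁ μ₂ : Matching M W} {m : M} {w : W}
    (h₁ : Satisfies μ μ₁ m w) (h₂ : Satisfies μ μ₂ m w) : μ₁ = μ₂ := by
  obtain ⟨a1, b1, c1, d1, e1, f1⟩ := h₁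
  obtain ⟨a2, b2, c2, d2, e2, f2⟩ := h₂
  refine matching_ext (funext fun m' => ?_) (funext fun w' => ?_)
  · by_cases hm : m' = m
    · subst hm; rw [a1, a2]
    · by_cases hf : μ.f m' = some w
      · rw [c1 m' hm hf, c2 m' hm hf]
      · rw [d1 m' hm hf, d2 m' hm hf]
  · by_cases hw : w' = w
    · subst hw; rw [b1, b2]
    · by_cases hg : μ.g w' = some m
      · rw [e1 w' hw hg, e2 w' hw hg]
      · rw [f1 w' hw hg, f2 w' hw hg]

section Instances

variable (E : Market M W)
  [∀ m a b, Decidable (E.prefM m a b)] [∀ w a b, Decidable (E.prefW w a b)]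
  [DecidableEq M] [DecidableEq W] [Fintype M] [Fintype W]

instance (μ : Matching M W) (m : M) (w : W) : Decidable (IsBlocking E μ m w) := by
  unfold IsBlocking; infer_instance

instance (μ : Matching M W) (m : M) (w : W) : Decidable (OptimalForM E μ m w) := by
  unfold OptimalForM; infer_instance

instance (μ : Matching M W) (m : M) (w : W) : Decidable (OptimalForW E μ m w) := by
  unfold OptimalForW; infer_instance

instance (μ : Matching M W) (m : M) (w : W) : Decidable (MutuallyOptimal E μ m w) := by
  unfold MutuallyOptimal; infer_instance

instance (μ : Matching M W) : Decidable (IndivRational E μ) := by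
  unfold IndivRational; infer_instance

instance (μ : Matching M W) : Decidable (IsStable E μ) := by
  unfold IsStable; infer_instance

instance (μ μ' : Matching M W) (m : M) (w : W) : Decidable (Satisfies μ μ' m w) := by
  unfold Satisfies; infer_instance

instance : DecidableEq (Matching M W) := fun μ₁ μ₂ =>
  decidable_of_iff (μ₁.f = μ₂.f ∧ μ₁.g = μ₂.g)
    ⟨fun ⟨h1, h2⟩ => matching_ext h1 h2, fun h => by subst h; exact ⟨rfl, rfl⟩⟩

end Instances

/-! ### The concrete 4×4 counterexample market -/

/-- Men's rank tables (lower is better); `none` (being single) is ranked `4`, i.e. worst. -/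
def rkM : Fin 4 → Option (Fin 4) → ℕ
  | _, none => 4
  | m, some w => ![![3,1,2,0], ![2,1,3,0], ![1,2,0,3], ![1,3,0,2]] m w

/-- Women's rank tables (lower is better). -/
def rkW : Fin 4 → Option (Fin 4) → ℕ
  | _, none => 4
  | w, some m => ![![0,1,3,2], ![3,2,1,0], ![0,1,2,3], ![2,3,1,0]] w m

theorem rkM_tri : ∀ (m : Fin 4) (a b : Option (Fin 4)),
    rkM m a < rkM m b ∨ a = b ∨ rkM m b < rkM m a := by decide

theorem rkW_tri : ∀ (w : Fin 4) (a b : Option (Fin 4)),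
    rkW w a < rkW w b ∨ a = b ∨ rkW w b < rkW w a := by decide

/-- The counterexample market. -/
def Emkt : Market (Fin 4) (Fin 4) where
  prefM m a b := rkM m a < rkM m b
  prefW w a b := rkW w a < rkW w b
  prefM_sto m :=
    { trichotomous := fun a b h1 h2 => (rkM_tri m a b).elim (fun h => absurd h h1) (fun h => h.elim id (fun h => absurd h h2))
      irrefl := fun a => Nat.lt_irrefl _
      trans := fun _ _ _ => Nat.lt_trans }
  prefW_sto w :=
    { trichotomous := fun a b h1 h2 => (rkW_tri w a b).elim (fun h => absurd h h1) (fun h => h.elim id (fun h => absurd h h2))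
      irrefl := fun a => Nat.lt_irrefl _
      trans := fun _ _ _ => Nat.lt_trans }

instance : ∀ m a b, Decidable (Emkt.prefM m a b) := fun _ a b => Nat.decLt _ _
instance : ∀ w a b, Decidable (Emkt.prefW w a b) := fun _ a b => Nat.decLt _ _

/-- Helper to build matchings on `Fin 4` with a decidable consistency check. -/
def mkMatch (f g : Fin 4 → Option (Fin 4))
    (h : ∀ m w, f m = some w ↔ g w = some m := by decide) :
    Matching (Fin 4) (Fin 4) := ⟨f, g, h⟩

/-- The initial matching. -/
def μinit : Matching (Fin 4) (Fin 4) :=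
  mkMatch ![some 2, none, some 1, some 0] ![some 3, some 2, some 0, none]

/-- The trap: a set of matchings, closed under the dynamics, containing no stable matching. -/
def trapS : List (Matching (Fin 4) (Fin 4)) :=
  [ μinit
  , mkMatch ![some 2, some 1, none, some 0] ![some 3, some 1, some 0, none]
  , mkMatch ![some 2, some 1, none, some 3] ![none, some 1, some 0, some 3]
  , mkMatch ![some 3, some 0, some 1, none] ![some 1, some 2, none, some 0]
  , mkMatch ![some 3, some 0, some 2, none] ![some 1, none, some 2, some 0]
  , mkMatch ![some 3, none, some 1, some 0] ![some 3, some 2, none, some 0]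
  , mkMatch ![none, some 0, some 2, some 3] ![some 1, none, some 2, some 3]
  , mkMatch ![none, some 1, some 2, some 3] ![none, some 1, some 2, some 3] ]

theorem trap_mem : μinit ∈ trapS := by decide

theorem trap_ir : IndivRational Emkt μinit := by decide

theorem trap_unstable : ∀ μ ∈ trapS, ¬ IsStable Emkt μ := by decide

theorem trap_closed : ∀ μ ∈ trapS, ∀ m w, IsBlocking Emkt μ m w →
    ((∃ m' w', MutuallyOptimal Emkt μ m' w') → MutuallyOptimal Emkt μ m w) →
    ∃ μ' ∈ trapS, Satisfies μ μ' m w := by decide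

/-- There exist a finite marriage market and an individually rational matching `μ0` such
that no finite sequence of matchings starting at `μ0` and ending in a stable matching has
the property that each step satisfies a blocking pair which is mutually optimal whenever
the current matching admits at least one mutually optimal blocking pair. -/
theorem no_deterministic_mutually_optimal_path_to_stability :
    ∃ (M W : Type) (_ : Fintype M) (_ : Fintype W) (_ : Nonempty M) (_ : Nonempty W)
      (E : Market M W) (μ0 : Matching M W),
      IndivRational E μ0 ∧
      ¬ ∃ (k : ℕ) (seq : Fin (k + 1) → Matching M W),
          seq 0 = μ0 ∧ IsStable E (seq (Fin.last k)) ∧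
          ∀ i : Fin k, ∃ m w,
            IsBlocking E (seq i.castSucc) m w ∧
            Satisfies (seq i.castSucc) (seq i.succ) m w ∧
            ((∃ m' w', MutuallyOptimal E (seq i.castSucc) m' w') →
              MutuallyOptimal E (seq i.castSucc) m w) := by
  refine ⟨Fin 4, Fin 4, inferInstance, inferInstance, ⟨0⟩, ⟨0⟩, Emkt, μinit,
    trap_ir, ?_⟩
  rintro ⟨k, seq, h0, hstab, hstep⟩
  have hmem : ∀ i : Fin (k + 1), seq i ∈ trapS := by
    intro i
    induction i using Fin.induction with
    | zero => rw [h0]; exact trap_mem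
    | succ i ih =>
        obtain ⟨m, w, hb, hsat, hmo⟩ := hstep i
        obtain ⟨μ', hμ'S, hsat'⟩ := trap_closed _ ih m w hb hmo
        rw [satisfies_unique hsat hsat']
        exact hμ'S
  exact trap_unstable _ (hmem (Fin.last k)) hstab

end Marriage
end

section
/- For every finite marriage market and every matching μ, if (m,w) is a blocking pair of μ with w matched in μ (that is, μ(w) ≠ w), and μ' is the matching obtained from μ by satisfying (m,w), then Φ(μ') ≤ Φ(μ) − 1, where Φ is the potential function defined below. -/
namespace Marriage

variable {M W : Type*}

/-- The payoff of woman `w` in matching `μ`: the number of elements of `M ∪ {w}` that are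
strictly worse than her partner `μ(w)` under her preference. -/
noncomputable def payoffW (E : Market M W) (μ : Matching M W) (w : W) : ℕ :=
  {a : Option M | E.prefW w (μ.g w) a}.ncard

/-- The potential `Φ(μ) = Σ_{w matched in μ} (|M| − p_w(μ))`. -/
noncomputable def potential [Fintype M] (E : Market M W) (μ : Matching M W) : ℤ :=
  ∑ᶠ w ∈ {w : W | μ.g w ≠ none}, ((Fintype.card M : ℤ) - (payoffW E μ w : ℤ))

lemma ncard_pref_le {M W : Type} [Fintype M] (E : Market M W) (w : W) (p : Option M) :
    ({a : Option M | E.prefW w p a}).ncard ≤ Fintype.card M := by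
  haveI : IsStrictTotalOrder (Option M) (E.prefW w) := E.prefW_sto w
  set S := {a : Option M | E.prefW w p a} with hS
  have hp : p ∉ S := irrefl_of (E.prefW w) p
  have h2 : (insert p S).ncard = S.ncard + 1 := Set.ncard_insert_of_notMem hp S.toFinite
  have h3 : (insert p S).ncard ≤ (Set.univ : Set (Option M)).ncard :=
    Set.ncard_le_ncard (Set.subset_univ _) Set.finite_univ
  rw [Set.ncard_univ, Nat.card_eq_fintype_card, Fintype.card_option] at h3
  omega

lemma ncard_pref_lt {M W : Type} [Fintype M] (E : Market M W) (w : W) {p q : Option M}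
    (h : E.prefW w q p) :
    ({a : Option M | E.prefW w p a}).ncard + 1 ≤ ({a : Option M | E.prefW w q a}).ncard := by
  haveI : IsStrictTotalOrder (Option M) (E.prefW w) := E.prefW_sto w
  set S := {a : Option M | E.prefW w p a} with hS
  set T := {a : Option M | E.prefW w q a} with hT
  have hp : p ∉ S := irrefl_of (E.prefW w) p
  have hsub : insert p S ⊆ T := by
    intro a ha
    rcases ha with rfl | ha
    · exact h
    · exact trans_of (E.prefW w) h ha
  calc S.ncard + 1 = (insert p S).ncard := (Set.ncard_insert_of_notMem hp S.toFinite).symm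
    _ ≤ T.ncard := Set.ncard_le_ncard hsub T.toFinite

open Classical in
lemma potential_eq_sum {M W : Type} [Fintype M] [Fintype W] (E : Market M W)
    (ν : Matching M W) :
    potential E ν = ∑ w' : W,
      (if ν.g w' = none then 0 else ((Fintype.card M : ℤ) - (payoffW E ν w' : ℤ))) := by
  classical
  rw [potential, finsum_mem_def, finsum_eq_sum_of_fintype]
  apply Finset.sum_congr rfl
  intro w' _
  rw [Set.indicator_apply]
  by_cases h : ν.g w' = none <;> simp [h]

/-- Satisfying a blocking pair `(m, w)` whose woman `w` is matched decreases the potential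
by at least 1. -/
theorem potential_decreases_of_satisfy_blocking_pair_with_matched_woman
    {M W : Type} [Fintype M] [Fintype W] [Nonempty M] [Nonempty W]
    (E : Market M W) (μ μ' : Matching M W) (m : M) (w : W)
    (hblock : IsBlocking E μ m w) (hmatched : μ.g w ≠ none)
    (hsat : Satisfies μ μ' m w) :
    potential E μ' ≤ potential E μ - 1 := by
  classical
  obtain ⟨-, hgw', -, -, hg1, hg2⟩ := hsat
  obtain ⟨-, -, hwpref⟩ := hblock
  rw [potential_eq_sum, potential_eq_sum]
  have key : ∀ w' : W,
      (if μ'.g w' = none then 0 else ((Fintype.card M : ℤ) - (payoffW E μ' w' : ℤ)))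
        ≤ (if μ.g w' = none then 0 else ((Fintype.card M : ℤ) - (payoffW E μ w' : ℤ)))
          - (if w' = w then 1 else 0) := by
    intro w'
    by_cases hw : w' = w
    · subst hw
      rw [if_pos rfl, if_neg (by simp [hgw']), if_neg hmatched]
      have hlt : payoffW E μ w' + 1 ≤ payoffW E μ' w' := by
        rw [payoffW, payoffW, hgw']
        exact ncard_pref_lt E w' hwpref
      have := ncard_pref_le E w' (μ'.g w')
      rw [← payoffW] at this
      push_cast
      omega
    · rw [if_neg hw]
      by_cases hm : μ.g w' = some m
      · rw [hg1 w' hw hm, if_pos rfl, if_neg (by simp [hm])]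
        have := ncard_pref_le E w' (μ.g w')
        rw [← payoffW] at this
        push_cast
        omega
      · have heq : μ'.g w' = μ.g w' := hg2 w' hw hm
        have hpay : payoffW E μ' w' = payoffW E μ w' := by
          rw [payoffW, payoffW, heq]
        rw [heq, hpay]
        simp
  calc ∑ w' : W, (if μ'.g w' = none then 0
          else ((Fintype.card M : ℤ) - (payoffW E μ' w' : ℤ)))
      ≤ ∑ w' : W, ((if μ.g w' = none then 0
          else ((Fintype.card M : ℤ) - (payoffW E μ w' : ℤ)))
          - (if w' = w then 1 else 0)) := Finset.sum_le_sum fun w' _ => key w'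
    _ = (∑ w' : W, (if μ.g w' = none then 0
          else ((Fintype.card M : ℤ) - (payoffW E μ w' : ℤ)))) - 1 := by
        rw [Finset.sum_sub_distrib, Finset.sum_ite_eq' Finset.univ w (fun _ => (1 : ℤ)),
          if_pos (Finset.mem_univ w)]

end Marriage
end

section
/- For every finite marriage market, every sequence of matchings μ_1, μ_2, …, μ_k in which each μ_{i+1} is obtained from μ_i by satisfying a blocking pair (m_i,w_i) of μ_i with w_i matched in μ_i (that is, μ_i(w_i) ≠ w_i) has at most |W|·|M| steps, i.e., k ≤ |W|·|M| + 1. In particular, there is no infinite such sequence. -/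
namespace Marriage

variable {M W : Type*}

open scoped Classical in
/-- Potential of a woman: `|M|` if unmatched, otherwise the number of men strictly worse
than her current partner. -/
noncomputable def phi {M W : Type} [Fintype M] (E : Market M W) (μ : Matching M W)
    (w : W) : ℕ :=
  (μ.g w).elim (Fintype.card M)
    (fun m₀ => (Finset.univ.filter (fun m' => E.prefW w (some m₀) (some m'))).card)

lemma phi_le {M W : Type} [Fintype M] (E : Market M W) (μ : Matching M W) (w : W) :
    phi E μ w ≤ Fintype.card M := by
  classical
  cases h : μ.g w with
  | none => simp [phi, h]
  | some m₀ =>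
    simp only [phi, h, Option.elim]
    exact le_trans (Finset.card_filter_le _ _) (le_of_eq (Finset.card_univ))

lemma phi_step {M W : Type} [Fintype M] [Fintype W] (E : Market M W) (μ μ' : Matching M W)
    (m : M) (w : W) (hb : IsBlocking E μ m w) (hne : μ.g w ≠ none)
    (hs : Satisfies μ μ' m w) :
    (∑ w'', phi E μ w'') + 1 ≤ ∑ w'', phi E μ' w'' := by
  classical
  obtain ⟨m₀, hm₀⟩ : ∃ m₀, μ.g w = some m₀ := Option.ne_none_iff_exists'.mp hne
  haveI := E.prefW_sto w
  have hpref : E.prefW w (some m) (some m₀) := by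
    have := hb.2.2; rwa [hm₀] at this
  have hlt : phi E μ w < phi E μ' w := by
    have hA : phi E μ w =
        (Finset.univ.filter (fun m' => E.prefW w (some m₀) (some m'))).card := by
      simp [phi, hm₀]
    have hB : phi E μ' w =
        (Finset.univ.filter (fun m' => E.prefW w (some m) (some m'))).card := by
      simp [phi, hs.2.1]
    rw [hA, hB]
    apply Finset.card_lt_card
    constructor
    · intro x hx
      simp only [Finset.mem_filter, Finset.mem_univ, true_and] at hx ⊢
      exact _root_.trans hpref hx
    · intro hcon
      have hm₀B : m₀ ∈ Finset.univ.filter (fun m' => E.prefW w (some m) (some m')) := by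
        simp only [Finset.mem_filter, Finset.mem_univ, true_and]
        exact hpref
      have := hcon hm₀B
      simp only [Finset.mem_filter, Finset.mem_univ, true_and] at this
      exact irrefl_of (E.prefW w) (some m₀) this
  have hle : ∀ w'' ∈ (Finset.univ : Finset W), phi E μ w'' ≤ phi E μ' w'' := by
    intro w'' _
    by_cases hw : w'' = w
    · subst hw; exact le_of_lt hlt
    · by_cases h2 : μ.g w'' = some m
      · have h3 : μ'.g w'' = none := hs.2.2.2.2.1 w'' hw h2
        have : phi E μ' w'' = Fintype.card M := by simp [phi, h3]
        rw [this]
        exact phi_le E μ w''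
      · have h3 : μ'.g w'' = μ.g w'' := hs.2.2.2.2.2 w'' hw h2
        simp [phi, h3]
  exact Finset.sum_lt_sum hle ⟨w, Finset.mem_univ w, hlt⟩

/-- Every sequence of matchings in which each step satisfies a blocking pair whose woman
member is matched has at most `|W|·|M|` steps (i.e. at most `|W|·|M| + 1` matchings), and
in particular there is no infinite such sequence. -/
theorem bounded_sequences_of_blocking_pairs_with_matched_women
    {M W : Type} [Fintype M] [Fintype W] [Nonempty M] [Nonempty W]
    (E : Market M W) :
    (∀ (k : ℕ) (seq : Fin (k + 1) → Matching M W),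
      (∀ i : Fin k, ∃ m w,
        IsBlocking E (seq i.castSucc) m w ∧ (seq i.castSucc).g w ≠ none ∧
        Satisfies (seq i.castSucc) (seq i.succ) m w) →
      k ≤ Fintype.card W * Fintype.card M) ∧
    ¬ ∃ seq : ℕ → Matching M W,
        ∀ n : ℕ, ∃ m w,
          IsBlocking E (seq n) m w ∧ (seq n).g w ≠ none ∧
          Satisfies (seq n) (seq (n + 1)) m w := by
  classical
  have key : ∀ (k : ℕ) (seq : Fin (k + 1) → Matching M W),
      (∀ i : Fin k, ∃ m w,
        IsBlocking E (seq i.castSucc) m w ∧ (seq i.castSucc).g w ≠ none ∧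
        Satisfies (seq i.castSucc) (seq i.succ) m w) →
      k ≤ Fintype.card W * Fintype.card M := by
    intro k seq hseq
    have mono : ∀ n : ℕ, ∀ hn : n ≤ k,
        n ≤ ∑ w'', phi E (seq ⟨n, by omega⟩) w'' := by
      intro n
      induction n with
      | zero => intro _; exact Nat.zero_le _
      | succ n ih =>
        intro hn
        have h1 := ih (by omega)
        obtain ⟨m, w, hb, hne, hs⟩ := hseq ⟨n, by omega⟩
        have hstep := phi_step E _ _ m w hb hne hs
        exact le_trans (Nat.add_le_add_right h1 1) hstep
    have hk := mono k le_rfl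
    have hbound : ∑ w'', phi E (seq ⟨k, by omega⟩) w'' ≤
        Fintype.card W * Fintype.card M := by
      calc ∑ w'', phi E (seq ⟨k, by omega⟩) w''
          ≤ ∑ _w'' : W, Fintype.card M :=
            Finset.sum_le_sum (fun w'' _ => phi_le E _ w'')
        _ = Fintype.card W * Fintype.card M := by
            simp [Finset.sum_const, Finset.card_univ, mul_comm]
    omega
  refine ⟨key, ?_⟩
  rintro ⟨seq, hseq⟩
  have := key (Fintype.card W * Fintype.card M + 1) (fun i => seq i.val) ?_
  · omega
  · intro i
    obtain ⟨m, w, hb, hne, hs⟩ := hseq i.val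
    exact ⟨m, w, hb, hne, hs⟩

end Marriage
end

section
/- Let μ' be a matching of a finite marriage market such that no blocking pair of μ' involves a matched woman (i.e., there is no blocking pair (m,w) of μ' with μ'(w) ≠ w). Let (m*, w*) be a blocking pair of μ' with w* unmatched in μ' that is optimal for w* (that is, m* ≻_{w*} m for every other man m forming a blocking pair with w* at μ'), and let μ'' be the matching obtained from μ' by satisfying (m*, w*). Then no blocking pair of μ'' involves a matched woman: there is no blocking pair (m,w) of μ'' with μ''(w) ≠ w. -/
namespace Marriage

variable {M W : Type*}

/-- If no blocking pair of `μ'` involves a matched woman, and `μ''` is obtained from `μ'`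
by satisfying a blocking pair `(m*, w*)` with `w*` unmatched that is optimal for `w*`,
then no blocking pair of `μ''` involves a matched woman. -/
theorem no_matched_woman_blocking_preserved
    {M W : Type} [Fintype M] [Fintype W] [Nonempty M] [Nonempty W]
    (E : Market M W) (μ' μ'' : Matching M W) (mstar : M) (wstar : W)
    (hnone : ¬ ∃ m w, IsBlocking E μ' m w ∧ μ'.g w ≠ none)
    (hunmatched : μ'.g wstar = none)
    (hopt : OptimalForW E μ' mstar wstar)
    (hsat : Satisfies μ' μ'' mstar wstar) :
    ¬ ∃ m w, IsBlocking E μ'' m w ∧ μ''.g w ≠ none := by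
  rintro ⟨m, w, ⟨hne, hm, hw⟩, hmatched⟩
  obtain ⟨⟨hne', hm', hw'⟩, hoptw⟩ := hopt
  obtain ⟨h1, h2, h3, h4, h5, h6⟩ := hsat
  haveI := E.prefW_sto w
  haveI := E.prefM_sto mstar
  by_cases hww : w = wstar
  · subst hww
    rw [h2] at hw
    have hmne : m ≠ mstar := by rintro rfl; exact hne h1
    have hfm : μ'.f m ≠ some w := fun h => by
      rw [(μ'.consistent m w).mp h] at hunmatched
      exact Option.some_ne_none _ hunmatched
    have hfm2 : μ''.f m = μ'.f m := h4 m hmne hfm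
    have hblock : IsBlocking E μ' m w :=
      ⟨hfm, by rwa [hfm2] at hm, by rw [hunmatched]; exact trans_of _ hw (hunmatched ▸ hw')⟩
    exact asymm_of (E.prefW w) hw (hoptw m hblock hmne)
  · have hgww : μ'.g w ≠ some mstar := by
      intro h
      rw [h5 w hww h] at hmatched
      exact hmatched rfl
    have hgw : μ''.g w = μ'.g w := h6 w hww hgww
    rw [hgw] at hw hmatched
    by_cases hmm : m = mstar
    · subst hmm
      refine hnone ⟨m, w, ⟨?_, ?_, hw⟩, hmatched⟩
      · intro h; exact hgww ((μ'.consistent m w).mp h)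
      · rw [h1] at hm
        exact trans_of _ hm hm'
    · have hfm : μ'.f m ≠ some wstar := fun h => by
        rw [(μ'.consistent m wstar).mp h] at hunmatched
        exact Option.some_ne_none _ hunmatched
      have hfm2 : μ''.f m = μ'.f m := h4 m hmm hfm
      rw [hfm2] at hne hm
      exact hnone ⟨m, w, ⟨hne, hm, hw⟩, hmatched⟩

end Marriage
end

section
/- Under the assumptions below (awareness-monotone transitions, no redundancies, and richness), there exist a state ω ∈ Ω and a matching μ such that τ(ω,μ) = ω and μ is stable with respect to the preference profile (≻_i^ω)_{i ∈ M ∪ W} at ω, i.e., μ is individually rational and admits no blocking pair under these preferences. In particular, every finite dynamic two-sided matching game with unawareness has a self-confirming outcome: a pair of a matching that is stable at the state and a state that is absorbing given the matching. -/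
namespace Marriage

variable {M W : Type*}

set_option linter.unusedVariables false
set_option linter.unusedSectionVars false

section Exists

variable {M W : Type} [Fintype M] [Fintype W]

def OW (E : Market M W) (_m : M) : Type := Option W
def OM (E : Market M W) (_w : W) : Type := Option M

noncomputable instance (E : Market M W) (m : M) : CompleteLinearOrder (OW E m) :=
  haveI h := E.prefM_sto m
  haveI : IsStrictTotalOrder (OW E m) (flip (E.prefM m)) :=
    { trichotomous := fun a b => by intro h1 h2; exact (h.trichotomous b a h1 h2).symm
      irrefl := fun a => h.irrefl a
      trans := fun a b c hab hbc => h.trans _ _ _ hbc hab }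
  letI : LinearOrder (OW E m) := @linearOrderOfSTO _ (flip (E.prefM m)) _ (Classical.decRel _)
  haveI : Fintype (OW E m) := inferInstanceAs (Fintype (Option W))
  haveI : Nonempty (OW E m) := ⟨(none : Option W)⟩
  Fintype.toCompleteLinearOrderOfNonempty _

noncomputable instance (E : Market M W) (w : W) : CompleteLinearOrder (OM E w) :=
  haveI h := E.prefW_sto w
  haveI : IsStrictTotalOrder (OM E w) (flip (E.prefW w)) :=
    { trichotomous := fun a b => by intro h1 h2; exact (h.trichotomous b a h1 h2).symm
      irrefl := fun a => h.irrefl a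
      trans := fun a b c hab hbc => h.trans _ _ _ hbc hab }
  letI : LinearOrder (OM E w) := @linearOrderOfSTO _ (flip (E.prefW w)) _ (Classical.decRel _)
  haveI : Fintype (OM E w) := inferInstanceAs (Fintype (Option M))
  haveI : Nonempty (OM E w) := ⟨(none : Option M)⟩
  Fintype.toCompleteLinearOrderOfNonempty _

theorem ltOW_iff (E : Market M W) (m : M) (a b : OW E m) : a < b ↔ E.prefM m b a := Iff.rfl
theorem ltOM_iff (E : Market M W) (w : W) (a b : OM E w) : a < b ↔ E.prefW w b a := Iff.rfl

/-- women `m` finds attainable given the women's current options `y`. -/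
def SM (E : Market M W) (m : M) (y : ∀ w, OM E w) : Set (OW E m) :=
  {o | ∀ w : W, o = some w → y w ≤ (some m : OM E w)}

def SW (E : Market M W) (w : W) (x : ∀ m, OW E m) : Set (OM E w) :=
  {o | ∀ m : M, o = some m → x m ≤ (some w : OW E m)}

theorem none_mem_SM (E : Market M W) (m : M) (y : ∀ w, OM E w) :
    (show OW E m from none) ∈ SM E m y := fun w h => by
  exact absurd h (by simp [OW])

theorem none_mem_SW (E : Market M W) (w : W) (x : ∀ m, OW E m) :
    (show OM E w from none) ∈ SW E w x := fun m h => by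
  exact absurd h (by simp [OM])

/-- the Adachi prematching lattice. -/
instance (E : Market M W) (m : M) : Finite (OW E m) := inferInstanceAs (Finite (Option W))
instance (E : Market M W) (w : W) : Finite (OM E w) := inferInstanceAs (Finite (Option M))

def A (E : Market M W) : Type := (∀ m, OW E m) × (∀ w, OM E w)ᵒᵈ

noncomputable instance (E : Market M W) : CompleteLattice (A E) :=
  inferInstanceAs (CompleteLattice ((∀ m, OW E m) × (∀ w, OM E w)ᵒᵈ))

noncomputable def T (E : Market M W) : A E →o A E where
  toFun p := (fun m => sSup (SM E m (OrderDual.ofDual p.2)),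
              OrderDual.toDual fun w => sSup (SW E w p.1))
  monotone' := by
    rintro ⟨x, y⟩ ⟨x', y'⟩ ⟨hx, hy⟩
    refine ⟨fun m => sSup_le_sSup fun o ho w hw => ?_,
            fun w => sSup_le_sSup fun o ho m hm => ?_⟩
    · exact le_trans (hy w) (ho w hw)
    · exact le_trans (hx m) (ho m hm)

theorem exists_stable (E : Market M W) : ∃ μ : Matching M W, IsStable E μ := by
  classical
  obtain ⟨p, hp⟩ : ∃ p : A E, T E p = p := ⟨OrderHom.lfp (T E), OrderHom.map_lfp (T E)⟩
  set x : ∀ m, OW E m := p.1 with hxdef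
  set y : ∀ w, OM E w := OrderDual.ofDual p.2 with hydef
  have hx : ∀ m, x m = sSup (SM E m y) := fun m =>
    (congrFun (congrArg Prod.fst hp) m).symm
  have hy : ∀ w, y w = sSup (SW E w x) := fun w =>
    (congrFun (congrArg (fun q : A E => OrderDual.ofDual q.2) hp) w).symm
  -- membership
  have hxmem : ∀ m, x m ∈ SM E m y := fun m => by
    rw [hx m]
    exact Set.Nonempty.csSup_mem ⟨_, none_mem_SM E m y⟩ (Set.toFinite _)
  have hymem : ∀ w, y w ∈ SW E w x := fun w => by
    rw [hy w]
    exact Set.Nonempty.csSup_mem ⟨_, none_mem_SW E w x⟩ (Set.toFinite _)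
  have hxub : ∀ m, ∀ o ∈ SM E m y, o ≤ x m := fun m o ho => (hx m) ▸ le_sSup ho
  have hyub : ∀ w, ∀ o ∈ SW E w x, o ≤ y w := fun w o ho => (hy w) ▸ le_sSup ho
  -- consistency
  have hcons : ∀ m w, x m = (some w : Option W) ↔ y w = (some m : Option M) := by
    intro m w
    constructor
    · intro h
      have h1 : y w ≤ (show OM E w from some m) := hxmem m w h
      have h2 : (show OM E w from some m) ≤ y w := by
        refine hyub w (show OM E w from some m) fun m' hm' => ?_
        have hmm : m = m' := by simpa [OM] using hm'
        subst hmm; exact le_of_eq h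
      exact le_antisymm h1 h2
    · intro h
      have h1 : x m ≤ (show OW E m from some w) := hymem w m h
      have h2 : (show OW E m from some w) ≤ x m := by
        refine hxub m (show OW E m from some w) fun w' hw' => ?_
        have hww : w = w' := by simpa [OW] using hw'
        subst hww; exact le_of_eq h
      exact le_antisymm h1 h2
  refine ⟨⟨fun m => x m, fun w => y w, hcons⟩, ⟨?_, ?_⟩, ?_⟩
  · -- IR men
    intro m hm
    have : (x m : OW E m) < (none : Option W) := (ltOW_iff E m _ _).2 hm
    exact absurd this (not_lt.2 (hxub m _ (none_mem_SM E m y)))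
  · intro w hw
    have : (y w : OM E w) < (none : Option M) := (ltOM_iff E w _ _).2 hw
    exact absurd this (not_lt.2 (hyub w _ (none_mem_SW E w x)))
  · rintro m w ⟨-, hbm, hbw⟩
    have hle : (show OW E m from some w) ≤ x m := by
      refine hxub m (show OW E m from some w) fun w' hw' => ?_
      have hww : w = w' := by simpa [OW] using hw'
      subst hww
      exact le_of_lt ((ltOM_iff E w _ _).2 hbw)
    exact absurd ((ltOW_iff E m _ _).2 hbm) (not_lt.2 hle)

end Exists

/-- Every finite dynamic two-sided matching game with unawareness (awareness-monotone
transitions, no redundancies, richness) has a self-confirming outcome: a state `ω` that is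
absorbing given a matching `μ` which is stable with respect to the preferences at `ω`. -/
theorem exists_self_confirming_outcome
    {M W Ω L : Type} [Fintype M] [Fintype W] [Nonempty M] [Nonempty W]
    [Fintype Ω] [Nonempty Ω] [Fintype L] [Lattice L] [OrderTop L]
    (a : M ⊕ W → Ω → L)                      -- awareness levels of players at states
    (E : Ω → Market M W)                     -- state-dependent preference profiles
    (τ : Ω → Matching M W → Ω)               -- transition function
    (hmono : ∀ (i : M ⊕ W) (ω : Ω) (μ : Matching M W), a i ω ≤ a i (τ ω μ))
    (hnored : ∀ ω ω' : Ω, ω ≠ ω' → ∃ i : M ⊕ W, a i ω ≠ a i ω')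
    (hrich : ∃ ω : Ω, ∀ i : M ⊕ W, a i ω = ⊤) :
    ∃ (ω : Ω) (μ : Matching M W), τ ω μ = ω ∧ IsStable (E ω) μ := by
  obtain ⟨ω, hω⟩ := hrich
  obtain ⟨μ, hμ⟩ := exists_stable (E ω)
  refine ⟨ω, μ, ?_, hμ⟩
  by_contra hne
  obtain ⟨i, hi⟩ := hnored _ _ hne
  exact hi (le_antisymm ((hω i) ▸ le_top) ((hω i) ▸ hmono i ω μ))

end Marriage
end

section
/- In the 3×3 marriage market of Knuth's Example 1, there exist eight pairwise distinct matchings μ_1, μ_2, …, μ_8 with μ_1 matching m1–w1, m2–w2, m3–w3, such that for every i ∈ {1,…,8} (indices taken cyclically, so μ_9 = μ_1) the matching μ_{i+1} is obtained from μ_i by satisfying a blocking pair of μ_i, and none of μ_1, …, μ_8 is stable. Hence a deterministic decentralized process of satisfying blocking pairs can cycle forever without reaching a stable matching. -/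
namespace Marriage

variable {M W : Type*}

/-- Rank (lower = better) on `Option (Fin n)` induced by a rank matrix, with being
unmatched (`none`) strictly worse than any partner. -/
def optRank {n : ℕ} (r : Fin n → Fin n → ℕ) (i : Fin n) : Option (Fin n) → ℕ
  | none => n
  | some j => r i j

/-- Build a market on `Fin n × Fin n` from rank matrices (lower rank = more preferred). -/
def mkMarket {n : ℕ} (rM rW : Fin n → Fin n → ℕ)
    (hM : ∀ (i : Fin n) (a b : Option (Fin n)),
      optRank rM i a < optRank rM i b ∨ a = b ∨ optRank rM i b < optRank rM i a)
    (hW : ∀ (i : Fin n) (a b : Option (Fin n)),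
      optRank rW i a < optRank rW i b ∨ a = b ∨ optRank rW i b < optRank rW i a) :
    Market (Fin n) (Fin n) where
  prefM m a b := optRank rM m a < optRank rM m b
  prefW w a b := optRank rW w a < optRank rW w b
  prefM_sto m :=
    { trichotomous := fun a b h1 h2 => ((hM m a b).resolve_left h1).resolve_right h2
      irrefl := fun _ => lt_irrefl _
      trans := fun _ _ _ h1 h2 => lt_trans h1 h2 }
  prefW_sto w :=
    { trichotomous := fun a b h1 h2 => ((hW w a b).resolve_left h1).resolve_right h2
      irrefl := fun _ => lt_irrefl _
      trans := fun _ _ _ h1 h2 => lt_trans h1 h2 }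

/-- Rank matrix for the men of Knuth's Example 1. -/
def KnuthM : Fin 3 → Fin 3 → ℕ := ![![1,0,2], ![0,2,1], ![0,1,2]]

/-- Rank matrix for the women of Knuth's Example 1. -/
def KnuthW : Fin 3 → Fin 3 → ℕ := ![![0,2,1], ![1,2,0], ![0,2,1]]

/-- The 3×3 marriage market of Knuth's Example 1. -/
def Knuth : Market (Fin 3) (Fin 3) := mkMarket KnuthM KnuthW (by decide) (by decide)

/-- The matching μ₁ of Knuth's Example 1: m1–w1, m2–w2, m3–w3. -/
def Knuthmu1 : Matching (Fin 3) (Fin 3) :=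
  ⟨![some 0, some 1, some 2], ![some 0, some 1, some 2], by decide⟩

-- Auxiliary decidability instances and the explicit cycle

instance decPrefM (m : Fin 3) (a b : Option (Fin 3)) : Decidable (Knuth.prefM m a b) :=
  inferInstanceAs (Decidable (optRank KnuthM m a < optRank KnuthM m b))

instance decPrefW (w : Fin 3) (a b : Option (Fin 3)) : Decidable (Knuth.prefW w a b) :=
  inferInstanceAs (Decidable (optRank KnuthW w a < optRank KnuthW w b))

instance decBlocking (μ : Matching (Fin 3) (Fin 3)) (m w : Fin 3) :
    Decidable (IsBlocking Knuth μ m w) :=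
  inferInstanceAs (Decidable (μ.f m ≠ some w ∧ Knuth.prefM m (some w) (μ.f m) ∧
    Knuth.prefW w (some m) (μ.g w)))

instance decSat (μ μ' : Matching (Fin 3) (Fin 3)) (m w : Fin 3) :
    Decidable (Satisfies μ μ' m w) :=
  inferInstanceAs (Decidable (μ'.f m = some w ∧ μ'.g w = some m ∧
    (∀ m', m' ≠ m → μ.f m' = some w → μ'.f m' = none) ∧
    (∀ m', m' ≠ m → μ.f m' ≠ some w → μ'.f m' = μ.f m') ∧
    (∀ w', w' ≠ w → μ.g w' = some m → μ'.g w' = none) ∧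
    (∀ w', w' ≠ w → μ.g w' ≠ some m → μ'.g w' = μ.g w')))

instance decIR (μ : Matching (Fin 3) (Fin 3)) : Decidable (IndivRational Knuth μ) :=
  inferInstanceAs (Decidable ((∀ m, ¬ Knuth.prefM m none (μ.f m)) ∧
    (∀ w, ¬ Knuth.prefW w none (μ.g w))))

instance decStable (μ : Matching (Fin 3) (Fin 3)) : Decidable (IsStable Knuth μ) :=
  inferInstanceAs (Decidable (IndivRational Knuth μ ∧ ∀ m w, ¬ IsBlocking Knuth μ m w))

def mu2 : Matching (Fin 3) (Fin 3) :=
  ⟨![some 1, none, some 2], ![none, some 0, some 2], by decide⟩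
def mu3 : Matching (Fin 3) (Fin 3) :=
  ⟨![some 1, some 0, some 2], ![some 1, some 0, some 2], by decide⟩
def mu4 : Matching (Fin 3) (Fin 3) :=
  ⟨![none, some 0, some 1], ![some 1, some 2, none], by decide⟩
def mu5 : Matching (Fin 3) (Fin 3) :=
  ⟨![some 2, some 0, some 1], ![some 1, some 2, some 0], by decide⟩
def mu6 : Matching (Fin 3) (Fin 3) :=
  ⟨![some 2, none, some 0], ![some 2, none, some 0], by decide⟩
def mu7 : Matching (Fin 3) (Fin 3) :=
  ⟨![some 0, none, none], ![some 0, none, none], by decide⟩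
def mu8 : Matching (Fin 3) (Fin 3) :=
  ⟨![some 0, some 1, none], ![some 0, some 1, none], by decide⟩

def kseq : Fin 8 → Matching (Fin 3) (Fin 3) :=
  ![Knuthmu1, mu2, mu3, mu4, mu5, mu6, mu7, mu8]

def kM : Fin 8 → Fin 3 := ![0, 1, 2, 0, 2, 0, 1, 2]
def kW : Fin 8 → Fin 3 := ![1, 0, 1, 2, 0, 0, 1, 2]


/-- In Knuth's 3×3 market, there are eight pairwise distinct matchings, starting with
m1–w1, m2–w2, m3–w3, such that each next one (cyclically) is obtained from the previous
by satisfying a blocking pair, and none of them is stable. -/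
theorem knuth_cycle :
    ∃ seq : Fin 8 → Matching (Fin 3) (Fin 3),
      Function.Injective seq ∧
      seq 0 = Knuthmu1 ∧
      (∀ i : Fin 8, ∃ m w,
        IsBlocking Knuth (seq i) m w ∧ Satisfies (seq i) (seq (i + 1)) m w) ∧
      (∀ i : Fin 8, ¬ IsStable Knuth (seq i)) := by
  refine ⟨kseq, ?_, rfl, ?_, ?_⟩
  · intro i j h
    have hf := congrArg Matching.f h
    fin_cases i <;> fin_cases j <;>
      first | rfl | exact absurd hf (by decide)
  · intro i
    refine ⟨kM i, kW i, ?_, ?_⟩ <;> fin_cases i <;> decide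
  · intro i
    fin_cases i <;> decide

end Marriage
end
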